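/- Let C be a κ-accessible category with finite products such that the Cartesian product functor preserves κ-filtered colimits separately in each variable. Then an object (X → c) of the slice category C/c is κ-compact in C/c if and only if X is a κ-compact object of C. -/

import Mathlib

/-!
STATEMENT 4: Let `C` be κ-accessible with finite products such that the Cartesian
product preserves κ-filtered colimits in each variable. Then an object `X → c` of
`C/c` is κ-compact in `C/c` iff `X` is κ-compact in `C`.
-/

open CategoryTheory CategoryTheory.Limits

universe w v u

/-- A category `J` is `κ`-filtered if every diagram indexed by a category with fewer
than `κ` morphisms admits a cocone. -/
def IsCardinalFiltered (κ : Cardinal.{w}) (J : Cat.{w, w}) : Prop :=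
  ∀ A : Cat.{w, w}, Cardinal.mk (Σ (a : A) (b : A), a ⟶ b) < κ →
    ∀ F : A ⥤ J, Nonempty (Cocone F)

/-- An object `X` is `κ`-compact if `Map(X, -)` preserves `κ`-filtered colimits. -/
def IsCardinalCompact (κ : Cardinal.{w}) {C : Type u} [Category.{v} C] (X : C) : Prop :=
  ∀ J : Cat.{w, w}, IsCardinalFiltered κ J →
    Nonempty (PreservesColimitsOfShape J (coyoneda.obj (Opposite.op X)))

/-- A category is `κ`-accessible if it has `κ`-filtered colimits, every object is a
`κ`-filtered colimit of `κ`-compact objects, and the `κ`-compact objects form an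
essentially small subcategory. -/
def IsCardinalAccessible (κ : Cardinal.{w}) (C : Type u) [Category.{v} C] : Prop :=
  (∀ J : Cat.{w, w}, IsCardinalFiltered κ J → HasColimitsOfShape J C) ∧
  (∀ X : C, ∃ (J : Cat.{w, w}) (F : J ⥤ C) (c : Cocone F),
      Nonempty (IsColimit c) ∧ IsCardinalFiltered κ J ∧
      (∀ j : J, IsCardinalCompact κ (F.obj j)) ∧ Nonempty (c.pt ≅ X)) ∧
  (∃ (ι : Type w) (G : ι → C), (∀ i, IsCardinalCompact κ (G i)) ∧
      ∀ X : C, IsCardinalCompact κ X → ∃ i, Nonempty (X ≅ G i))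

/-- A `κ`-filtered category (for `κ` regular) is filtered. -/
lemma isFiltered_of_isCardinalFiltered {κ : Cardinal.{w}} (hκ : κ.IsRegular) (J : Cat.{w, w})
    (hJ : IsCardinalFiltered κ J) : IsFiltered J := by
  apply IsFiltered.of_cocone_nonempty.{w}
  intro A _ _ F
  haveI : Fintype A := FinCategory.fintypeObj
  haveI : ∀ a b : A, Fintype (a ⟶ b) := fun a b => FinCategory.fintypeHom a b
  haveI : Finite (Σ (a : A) (b : A), a ⟶ b) := inferInstance
  exact hJ (Cat.of A)
    (lt_of_lt_of_le (Cardinal.mk_lt_aleph0_iff.mpr this) hκ.aleph0_le) F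

theorem statement4 {C : Type u} [Category.{v} C] [HasFiniteProducts C]
    (κ : Cardinal.{w}) (hκ : κ.IsRegular) (hacc : IsCardinalAccessible κ C)
    (hprod : ∀ (Y : C) (J : Cat.{w, w}), IsCardinalFiltered κ J →
      Nonempty (PreservesColimitsOfShape J (prod.functor.obj Y)))
    {c : C} (f : Over c) :
    IsCardinalCompact κ f ↔ IsCardinalCompact κ f.left := by
  constructor
  · -- `f` compact in `C/c` implies `f.left` compact in `C`.
    intro hf J hJ
    haveI : HasColimitsOfShape J C := hacc.1 J hJ
    haveI h1 : PreservesColimitsOfShape J (coyoneda.obj (Opposite.op f)) := (hf J hJ).some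
    haveI h2 : PreservesColimitsOfShape J (prod.functor.obj c) := (hprod c J hJ).some
    -- `star c ⋙ forget c` is isomorphic to `c ⨯ -`, hence preserves `J`-colimits.
    have e : Over.star c ⋙ Over.forget c ≅ prod.functor.obj c :=
      NatIso.ofComponents (fun Y => Iso.refl _) (by intro Y Z g; exact (Category.comp_id _).trans (Category.id_comp _).symm)
    haveI : PreservesColimitsOfShape J (Over.star c ⋙ Over.forget c) :=
      preservesColimitsOfShape_of_natIso e.symm
    -- The forgetful functor creates (hence reflects) colimits, so `star c` preserves them.
    haveI : PreservesColimitsOfShape J (Over.star c) :=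
      preservesColimitsOfShape_of_reflects_of_preserves _ (Over.forget c)
    -- `Hom_C(f.left, -) ≅ Hom_{C/c}(f, star c -)` via the adjunction `forget ⊣ star`.
    have e2 : Over.star c ⋙ coyoneda.obj (Opposite.op f) ≅
        coyoneda.obj (Opposite.op f.left) := by
      refine NatIso.ofComponents
        (fun Y => (((Over.forgetAdjStar c).homEquiv f Y).toIso).symm) ?_
      intro Y Z g
      ext u
      exact Adjunction.homEquiv_naturality_right_symm _ _ _
    exact ⟨preservesColimitsOfShape_of_natIso e2⟩
  · -- `f.left` compact in `C` implies `f` compact in `C/c`.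
    intro hX J hJ
    haveI hfil : IsFiltered J := isFiltered_of_isCardinalFiltered hκ J hJ
    haveI : HasColimitsOfShape J C := hacc.1 J hJ
    haveI hX' : PreservesColimitsOfShape J (coyoneda.obj (Opposite.op f.left)) :=
      (hX J hJ).some
    refine ⟨⟨fun {F} => ⟨fun {s} hs => ?_⟩⟩⟩
    -- The colimit is computed in `C`, and `Hom(f.left, -)` sends it to a colimit of types.
    have hs' : IsColimit ((Over.forget c).mapCocone s) :=
      isColimitOfPreserves (Over.forget c) hs
    have ht : IsColimit ((coyoneda.obj (Opposite.op f.left)).mapCocone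
        ((Over.forget c).mapCocone s)) := isColimitOfPreserves _ hs'
    haveI : HasColimit ((F ⋙ Over.forget c) ⋙ coyoneda.obj (Opposite.op f.left)) :=
      HasColimit.mk ⟨_, ht⟩
    refine ⟨Types.FilteredColimit.isColimitOf _ _ ?_ ?_⟩
    · -- joint surjectivity
      intro x
      obtain ⟨j, y, hy⟩ := Types.jointly_surjective_of_isColimit ht x.left
      have hy' : y ≫ (s.ι.app j).left = x.left := hy
      refine ⟨j, Over.homMk y ?_, ?_⟩
      · have hy'' : (y : f.left ⟶ (F.obj j).left) ≫ (s.ι.app j).left ≫ s.pt.hom = f.hom := by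
          exact (Category.assoc _ _ _).symm.trans ((congrArg (· ≫ s.pt.hom) hy').trans (Over.w x))
        rw [← Over.w (s.ι.app j)]
        exact hy''
      · apply Over.OverMorphism.ext
        exact hy'.symm
    · -- eventual equality of representatives
      intro i j xi xj hij
      have hij' : xi.left ≫ (s.ι.app i).left = xj.left ≫ (s.ι.app j).left := by
        have := congrArg CategoryTheory.CommaMorphism.left hij
        simpa using this
      obtain ⟨k, g, h, hk⟩ := (Types.FilteredColimit.isColimit_eq_iff _ ht
        (i := i) (j := j) (xi := xi.left) (xj := xj.left)).mp hij'
      refine ⟨k, g, h, ?_⟩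
      apply Over.OverMorphism.ext
      exact hk
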